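/- Consider an MPBKP instance, ε > 0, ε' > 0, and rounded rewards r̂_i satisfying r̂_i ≤ r_i ≤ (1+ε)·r̂_i for all i, taking at most m+1 distinct values. For each t partition I(t) into classes Î(t)_0, …, Î(t)_m by rounded-reward value, and let f_{Î(t)_j} denote the knapsack function of class j using the rounded rewards. Define f̃_0(c) = 0 for c ≥ 0 and −∞ for c < 0, and for each t ≥ 1 let ĥ_t be obtained from f̃_{t−1} by m+1 successive approximate convolutions, i.e., h^{(0)} = f̃_{t−1} and for j = 0,…,m the function h^{(j+1)} satisfies h^{(j+1)} ≤ h^{(j)} ⊕ f_{Î(t)_j} ≤ (1+ε')·h^{(j+1)} pointwise, with ĥ_t = h^{(m+1)}; finally set f̃_t = ĥ_t^{c_t}. Then for every t ∈ {1,…,T}, f̃_t(c) ≤ f_t(c) ≤ (1+ε)·(1+ε')^{(m+1)t}·f̃_t(c) for all 0 ≤ c ≤ c_t. -/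

import Mathlib

open scoped BigOperators

/-- Knapsack step function of a set `I` of items with (real) rewards `r` and sizes `q`. -/
noncomputable def knapFnR {n : ℕ} (r : Fin n → ℝ) (q : Fin n → ℕ) (I : Finset (Fin n)) :
    ℝ → EReal :=
  fun cap =>
    if cap < 0 then ⊥
    else ((I.powerset.filter fun S => (∑ i ∈ S, (q i : ℝ)) ≤ cap).sup
      fun S => ((∑ i ∈ S, r i : ℝ) : EReal))

/-- The (max,+)-convolution `(f ⊕ g)(c) = sup_{c'} (f(c') + g(c - c'))`. -/
noncomputable def conv (f g : ℝ → EReal) : ℝ → EReal :=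
  fun x => ⨆ y : ℝ, f y + g (x - y)

/-- Truncation `f^{c'}`: equals `f` on `(-∞, c']` and `-∞` above. -/
noncomputable def trunc (f : ℝ → EReal) (c : ℝ) : ℝ → EReal :=
  fun x => if x ≤ c then f x else ⊥

namespace Stmt14Aux


lemma add_iSup_e {ι : Sort*} [Nonempty ι] (c : EReal) (f : ι → EReal) :
    c + (⨆ i, f i) = ⨆ i, c + f i := by
  refine le_antisymm ?_ (iSup_le fun i => add_le_add_right (le_iSup f i) c)
  induction c using EReal.rec with
  | bot => simp
  | top =>
    rcases eq_or_ne (⨆ i, f i) ⊥ with hbot | hne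
    · rw [hbot]
      have : ∀ i, f i = ⊥ := by
        intro i; exact le_bot_iff.mp (hbot ▸ le_iSup f i)
      simp [this]
    · obtain ⟨i, hi⟩ : ∃ i, f i ≠ ⊥ := by
        by_contra hc
        push_neg at hc
        exact hne (le_bot_iff.mp (iSup_le fun i => (hc i).le))
      have : (⊤ : EReal) + f i = ⊤ := EReal.top_add_of_ne_bot hi
      refine le_trans ?_ (le_iSup _ i)
      rw [this]; exact le_top
  | coe x =>
    have key : (⨆ i, f i) ≤ ((-x : ℝ) : EReal) + ⨆ i, (x : EReal) + f i := by
      refine iSup_le fun i => ?_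
      have : f i = ((-x : ℝ) : EReal) + ((x : EReal) + f i) := by
        rw [← add_assoc, ← EReal.coe_add, neg_add_cancel, EReal.coe_zero, zero_add]
      rw [this]
      exact add_le_add_right (le_iSup (fun i => (x : EReal) + f i) i) (((-x : ℝ)) : EReal)
    calc (x : EReal) + (⨆ i, f i) ≤ (x : EReal) + (((-x : ℝ) : EReal) + ⨆ i, (x : EReal) + f i) :=
          add_le_add_right key (x : EReal)
    _ = ⨆ i, (x : EReal) + f i := by
        rw [← add_assoc, ← EReal.coe_add, add_neg_cancel, EReal.coe_zero, zero_add]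

lemma iSup_add_e {ι : Sort*} [Nonempty ι] (c : EReal) (f : ι → EReal) :
    (⨆ i, f i) + c = ⨆ i, f i + c := by
  rw [add_comm, add_iSup_e]
  exact iSup_congr fun i => add_comm _ _

lemma mul_distrib_e {a : ℝ} (ha : 0 < a) (x y : EReal) :
    (a : EReal) * (x + y) = (a : EReal) * x + (a : EReal) * y := by
  induction x using EReal.rec <;> induction y using EReal.rec <;>
    simp_all [EReal.coe_mul_bot_of_pos ha, EReal.coe_mul_top_of_pos ha,
      ← EReal.coe_mul, ← EReal.coe_add, EReal.top_add_of_ne_bot, EReal.add_top_of_ne_bot,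
      EReal.top_add_top, mul_add]

lemma mul_iSup_e {ι : Sort*} [Nonempty ι] {a : ℝ} (ha : 0 < a) (f : ι → EReal) :
    (a : EReal) * (⨆ i, f i) = ⨆ i, (a : EReal) * f i := by
  have hmul : ∀ (b c : ℝ), 0 < b → 0 < c → ∀ z : EReal,
      (b : EReal) * ((c : EReal) * z) = ((b * c : ℝ) : EReal) * z := by
    intro b c hb hc z
    rw [← mul_assoc, ← EReal.coe_mul]
  refine le_antisymm ?_ (iSup_le fun i =>
    mul_le_mul_of_nonneg_left (le_iSup f i) (by exact_mod_cast ha.le))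
  have key : (⨆ i, f i) ≤ ((a⁻¹ : ℝ) : EReal) * ⨆ i, (a : EReal) * f i := by
    refine iSup_le fun i => ?_
    have h1 : f i = ((a⁻¹ : ℝ) : EReal) * ((a : EReal) * f i) := by
      rw [hmul _ _ (inv_pos.2 ha) ha, inv_mul_cancel₀ ha.ne', EReal.coe_one, one_mul]
    rw [h1]
    exact mul_le_mul_of_nonneg_left (le_iSup (fun i => (a : EReal) * f i) i) (by exact_mod_cast (inv_pos.2 ha).le)
  calc (a : EReal) * (⨆ i, f i) ≤ (a : EReal) * (((a⁻¹ : ℝ) : EReal) * ⨆ i, (a : EReal) * f i) :=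
        mul_le_mul_of_nonneg_left key (by exact_mod_cast ha.le)
  _ = ⨆ i, (a : EReal) * f i := by
      rw [hmul _ _ ha (inv_pos.2 ha), mul_inv_cancel₀ ha.ne', EReal.coe_one, one_mul]

lemma le_scal_e {a : ℝ} (ha : 1 ≤ a) {v : EReal} (hv : v = ⊥ ∨ 0 ≤ v) :
    v ≤ (a : EReal) * v := by
  rcases hv with rfl | hv
  · rw [EReal.coe_mul_bot_of_pos (by linarith)]
  · calc v = 1 * v := (one_mul v).symm
    _ ≤ (a : EReal) * v := mul_le_mul_of_nonneg_right (by exact_mod_cast ha) hv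


variable {n : ℕ} (r r' : Fin n → ℝ) (q : Fin n → ℕ) (I A B : Finset (Fin n))

lemma knap_filter_nonempty {x : ℝ} (hx : ¬ x < 0) :
    (I.powerset.filter fun S => (∑ i ∈ S, (q i : ℝ)) ≤ x).Nonempty := by
  refine ⟨∅, Finset.mem_filter.2 ⟨Finset.empty_mem_powerset I, ?_⟩⟩
  simp [not_lt.1 hx]

lemma knap_neg {x : ℝ} (hx : x < 0) : knapFnR r q I x = ⊥ := if_pos hx

lemma knap_nonneg {x : ℝ} (hx : 0 ≤ x) : 0 ≤ knapFnR r q I x := by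
  rw [knapFnR, if_neg (not_lt.2 hx)]
  refine le_trans ?_ (Finset.le_sup (f := fun S => ((∑ i ∈ S, r i : ℝ) : EReal))
    (Finset.mem_filter.2 ⟨Finset.empty_mem_powerset I, by simpa using hx⟩))
  simp

lemma knap_bot_or_nonneg (x : ℝ) : knapFnR r q I x = ⊥ ∨ 0 ≤ knapFnR r q I x := by
  by_cases hx : x < 0
  · exact Or.inl (knap_neg r q I hx)
  · exact Or.inr (knap_nonneg r q I (not_lt.1 hx))

lemma knap_mono_cap : Monotone (knapFnR r q I) := by
  intro x y hxy
  by_cases hx : x < 0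
  · rw [knap_neg r q I hx]; exact bot_le
  · have hy : ¬ y < 0 := fun hy => hx (lt_of_le_of_lt hxy hy)
    rw [knapFnR, knapFnR, if_neg hx, if_neg hy]
    exact Finset.sup_mono (Finset.monotone_filter_right _ (fun S _ hS => le_trans hS hxy))

lemma knap_mono_r (hrr : ∀ i, r i ≤ r' i) (x : ℝ) : knapFnR r q I x ≤ knapFnR r' q I x := by
  by_cases hx : x < 0
  · rw [knap_neg r q I hx]; exact bot_le
  · rw [knapFnR, knapFnR, if_neg hx, if_neg hx]
    refine Finset.sup_le fun S hS => ?_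
    refine le_trans ?_ (Finset.le_sup hS)
    exact_mod_cast Finset.sum_le_sum fun i _ => hrr i

lemma knap_smul {a : ℝ} (ha : 0 < a) (x : ℝ) :
    knapFnR (fun i => a * r i) q I x = (a : EReal) * knapFnR r q I x := by
  by_cases hx : x < 0
  · rw [knap_neg _ q I hx, knap_neg r q I hx, EReal.coe_mul_bot_of_pos ha]
  · rw [knapFnR, knapFnR, if_neg hx, if_neg hx]
    apply le_antisymm
    · refine Finset.sup_le fun S hS => ?_
      have : ((∑ i ∈ S, a * r i : ℝ) : EReal) = (a : EReal) * ((∑ i ∈ S, r i : ℝ) : EReal) := by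
        rw [← Finset.mul_sum, EReal.coe_mul]
      rw [this]
      exact mul_le_mul_of_nonneg_left (Finset.le_sup (f := fun S => ((∑ i ∈ S, r i : ℝ) : EReal)) hS) (by exact_mod_cast ha.le)
    · obtain ⟨S0, hS0, hsup⟩ := Finset.exists_mem_eq_sup _ (knap_filter_nonempty q I hx)
        (fun S => ((∑ i ∈ S, r i : ℝ) : EReal))
      rw [hsup, ← EReal.coe_mul, Finset.mul_sum]
      exact Finset.le_sup (f := fun S => ((∑ i ∈ S, a * r i : ℝ) : EReal)) hS0

lemma knap_empty (x : ℝ) :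
    knapFnR r q (∅ : Finset (Fin n)) x = if x < 0 then (⊥ : EReal) else 0 := by
  rw [knapFnR]
  by_cases hx : x < 0
  · simp [hx]
  · simp [hx, Finset.powerset_empty, Finset.filter_singleton, not_lt.1 hx]

lemma conv_mono {f f' g g' : ℝ → EReal} (hf : ∀ y, f y ≤ f' y) (hg : ∀ y, g y ≤ g' y) (x : ℝ) :
    conv f g x ≤ conv f' g' x :=
  iSup_mono fun y => add_le_add (hf y) (hg (x - y))

lemma trunc_mono {f f' : ℝ → EReal} (hf : ∀ y, f y ≤ f' y) (c x : ℝ) :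
    trunc f c x ≤ trunc f' c x := by
  rw [trunc, trunc]
  split
  · exact hf x
  · exact le_refl ⊥

lemma trunc_scal {a : ℝ} (ha : 0 < a) (f : ℝ → EReal) (c x : ℝ) :
    trunc (fun y => (a : EReal) * f y) c x = (a : EReal) * trunc f c x := by
  rw [trunc, trunc]
  split
  · rfl
  · rw [EReal.coe_mul_bot_of_pos ha]

lemma conv_scal {a : ℝ} (ha : 0 < a) (f g : ℝ → EReal) (x : ℝ) :
    conv (fun y => (a : EReal) * f y) (fun y => (a : EReal) * g y) x
      = (a : EReal) * conv f g x := by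
  rw [conv, conv, mul_iSup_e ha]
  exact iSup_congr fun y => (mul_distrib_e ha _ _).symm

lemma conv_scal_left {a : ℝ} (ha : 1 ≤ a) {f g : ℝ → EReal}
    (hg : ∀ y, g y = ⊥ ∨ 0 ≤ g y) (x : ℝ) :
    conv (fun y => (a : EReal) * f y) g x ≤ (a : EReal) * conv f g x := by
  have ha0 : (0 : ℝ) < a := by linarith
  rw [conv, conv, mul_iSup_e ha0]
  refine iSup_mono fun y => ?_
  rw [mul_distrib_e ha0]
  exact add_le_add_right (le_scal_e ha (hg (x - y))) _

lemma conv_g0_left {F : ℝ → EReal} (hF : Monotone F) (x : ℝ) :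
    conv (fun y => if y < 0 then (⊥ : EReal) else 0) F x = F x := by
  apply le_antisymm
  · refine iSup_le fun y => ?_
    by_cases hy : y < 0
    · simp [hy]
    · simp only [hy, if_false, zero_add]
      exact hF (by linarith [not_lt.1 hy] : x - y ≤ x)
  · refine le_trans ?_ (le_iSup _ (0 : ℝ))
    simp

lemma le_conv_g0_right {f : ℝ → EReal} (x : ℝ) :
    f x ≤ conv f (fun y => if y < 0 then (⊥ : EReal) else 0) x := by
  refine le_trans ?_ (le_iSup _ x)
  simp


lemma knap_conv {A B : Finset (Fin n)} (hAB : Disjoint A B) (x : ℝ) :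
    conv (knapFnR r q A) (knapFnR r q B) x = knapFnR r q (A ∪ B) x := by
  apply le_antisymm
  · refine iSup_le fun y => ?_
    by_cases hy : y < 0
    · rw [knap_neg r q A hy, EReal.bot_add]; exact bot_le
    by_cases hxy : x - y < 0
    · rw [knap_neg r q B hxy, EReal.add_bot]; exact bot_le
    have hx : ¬ x < 0 := by push_neg at hy hxy ⊢; linarith
    rw [knapFnR, knapFnR, if_neg hy, if_neg hxy]
    obtain ⟨SA, hSA, hsupA⟩ := Finset.exists_mem_eq_sup _ (knap_filter_nonempty q A hy)
      (fun S => ((∑ i ∈ S, r i : ℝ) : EReal))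
    obtain ⟨SB, hSB, hsupB⟩ := Finset.exists_mem_eq_sup _ (knap_filter_nonempty q B hxy)
      (fun S => ((∑ i ∈ S, r i : ℝ) : EReal))
    rw [hsupA, hsupB]
    obtain ⟨hSA1, hSA2⟩ := Finset.mem_filter.1 hSA
    obtain ⟨hSB1, hSB2⟩ := Finset.mem_filter.1 hSB
    have hdisj : Disjoint SA SB :=
      hAB.mono (Finset.mem_powerset.1 hSA1) (Finset.mem_powerset.1 hSB1)
    have hmem : SA ∪ SB ∈ ((A ∪ B).powerset.filter fun S => (∑ i ∈ S, (q i : ℝ)) ≤ x) := by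
      refine Finset.mem_filter.2 ⟨Finset.mem_powerset.2 ?_, ?_⟩
      · exact Finset.union_subset_union (Finset.mem_powerset.1 hSA1) (Finset.mem_powerset.1 hSB1)
      · rw [Finset.sum_union hdisj]; linarith
    rw [knapFnR, if_neg hx, ← EReal.coe_add]
    refine le_trans (le_of_eq ?_) (Finset.le_sup (f := fun S => ((∑ i ∈ S, r i : ℝ) : EReal)) hmem)
    show ((∑ i ∈ SA, r i + ∑ i ∈ SB, r i : ℝ) : EReal) = ((∑ i ∈ SA ∪ SB, r i : ℝ) : EReal)
    rw [← Finset.sum_union hdisj]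
  · by_cases hx : x < 0
    · rw [knap_neg r q _ hx]; exact bot_le
    rw [knapFnR, if_neg hx]
    refine Finset.sup_le fun S hS => ?_
    obtain ⟨hS1, hS2⟩ := Finset.mem_filter.1 hS
    have hSsub : S ⊆ A ∪ B := Finset.mem_powerset.1 hS1
    have hsplit : S = (S ∩ A) ∪ (S ∩ B) := by
      rw [← Finset.inter_union_distrib_left, Finset.inter_eq_left.2 hSsub]
    have hdisj : Disjoint (S ∩ A) (S ∩ B) :=
      hAB.mono Finset.inter_subset_right Finset.inter_subset_right
    set y : ℝ := ∑ i ∈ S ∩ A, (q i : ℝ) with hy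
    have hy0 : 0 ≤ y := Finset.sum_nonneg fun i _ => by positivity
    have hsumq : (∑ i ∈ S, (q i : ℝ)) = y + ∑ i ∈ S ∩ B, (q i : ℝ) := by
      nth_rewrite 1 [hsplit]
      rw [Finset.sum_union hdisj]
    have hqB0 : 0 ≤ ∑ i ∈ S ∩ B, (q i : ℝ) := Finset.sum_nonneg fun i _ => by positivity
    refine le_trans ?_ (le_iSup _ y)
    have hA : ((∑ i ∈ S ∩ A, r i : ℝ) : EReal) ≤ knapFnR r q A y := by
      rw [knapFnR, if_neg (not_lt.2 hy0)]
      exact Finset.le_sup (f := fun S => ((∑ i ∈ S, r i : ℝ) : EReal))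
        (Finset.mem_filter.2 ⟨Finset.mem_powerset.2 Finset.inter_subset_right, le_of_eq rfl⟩)
    have hB : ((∑ i ∈ S ∩ B, r i : ℝ) : EReal) ≤ knapFnR r q B (x - y) := by
      have hxy0 : ¬ x - y < 0 := by push_neg; linarith
      rw [knapFnR, if_neg hxy0]
      exact Finset.le_sup (f := fun S => ((∑ i ∈ S, r i : ℝ) : EReal))
        (Finset.mem_filter.2 ⟨Finset.mem_powerset.2 Finset.inter_subset_right, by linarith⟩)
    calc ((∑ i ∈ S, r i : ℝ) : EReal)
        = ((∑ i ∈ S ∩ A, r i : ℝ) : EReal) + ((∑ i ∈ S ∩ B, r i : ℝ) : EReal) := by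
          rw [← EReal.coe_add]
          norm_cast
          nth_rewrite 1 [hsplit]
          rw [Finset.sum_union hdisj]
    _ ≤ knapFnR r q A y + knapFnR r q B (x - y) := add_le_add hA hB

lemma conv_assoc (f g h₀ : ℝ → EReal) (x : ℝ) :
    conv (conv f g) h₀ x = conv f (conv g h₀) x := by
  simp only [conv]
  calc ⨆ y, (⨆ z, f z + g (y - z)) + h₀ (x - y)
      = ⨆ y, ⨆ z, (f z + g (y - z)) + h₀ (x - y) :=
        iSup_congr fun y => iSup_add_e _ _
    _ = ⨆ z, ⨆ y, (f z + g (y - z)) + h₀ (x - y) := iSup_comm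
    _ = ⨆ z, f z + ⨆ y, (g (y - z) + h₀ (x - y)) := by
        refine iSup_congr fun z => ?_
        rw [add_iSup_e]
        exact iSup_congr fun y => add_assoc _ _ _
    _ = ⨆ z, f z + ⨆ w, (g w + h₀ (x - z - w)) := by
        refine iSup_congr fun z => congrArg (_ + ·) ?_
        have : ∀ y : ℝ, g (y - z) + h₀ (x - y) = g (y - z) + h₀ (x - z - (y - z)) := by
          intro y; congr 1; ring_nf
        rw [iSup_congr this]
        exact (Equiv.subRight z).surjective.iSup_comp (g := fun w => g w + h₀ (x - z - w))

lemma knap_conv_assoc {A B : Finset (Fin n)} (hAB : Disjoint A B) (f : ℝ → EReal) (x : ℝ) :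
    conv (conv f (knapFnR r q A)) (knapFnR r q B) x = conv f (knapFnR r q (A ∪ B)) x := by
  rw [conv_assoc]
  have : conv (knapFnR r q A) (knapFnR r q B) = knapFnR r q (A ∪ B) :=
    funext fun y => knap_conv r q hAB y
  rw [this]

end Stmt14Aux

noncomputable def fhatAux {n : ℕ} (g0 : ℝ → EReal) (rhat : Fin n → ℝ) (q : Fin n → ℕ)
    (d : Fin n → ℕ) (c : ℕ → ℕ) : ℕ → ℝ → EReal
  | 0 => g0
  | (t + 1) =>
      trunc (conv (fhatAux g0 rhat q d c t)
        (knapFnR rhat q (Finset.univ.filter fun i => d i = t + 1))) (c (t + 1))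


open Stmt14Aux in
/-- Approximation guarantee for the class-based FPTAS for MPBKP: with rounded rewards
`r̂_i ≤ r_i ≤ (1+ε)·r̂_i` grouped into `m+1` constant-reward classes, `f̃_0 = 0` on `[0,∞)`,
and each `f̃_t` obtained by `m+1` successive approximate `(max,+)`-convolutions (factor
`1+ε'` each) of `f̃_{t-1}` with the class knapsack functions followed by truncation at
`c_t`, one has `f̃_t(c) ≤ f_t(c) ≤ (1+ε)·(1+ε')^{(m+1)t}·f̃_t(c)` for `1 ≤ t ≤ T` and
`0 ≤ c ≤ c_t`. -/
theorem stmt14 {n : ℕ} (T : ℕ) (hT : 1 ≤ T)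
    (c : ℕ → ℕ) (hc0 : c 0 = 0) (hmono : ∀ s t, s ≤ t → t ≤ T → c s ≤ c t)
    (r q : Fin n → ℕ) (hr : ∀ i, 0 < r i) (hq : ∀ i, 0 < q i)
    (d : Fin n → ℕ) (hd : ∀ i, 1 ≤ d i ∧ d i ≤ T)
    (f : ℕ → ℝ → EReal)
    (hf1 : f 1 =
      trunc (knapFnR (fun i => (r i : ℝ)) q (Finset.univ.filter fun i => d i = 1)) (c 1))
    (hft : ∀ t, 2 ≤ t → t ≤ T →
      f t = trunc (conv (f (t - 1))
        (knapFnR (fun i => (r i : ℝ)) q (Finset.univ.filter fun i => d i = t))) (c t))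
    (ε ε' : ℝ) (hε : 0 < ε) (hε' : 0 < ε')
    (rhat : Fin n → ℝ) (hrhat : ∀ i, rhat i ≤ (r i : ℝ) ∧ (r i : ℝ) ≤ (1 + ε) * rhat i)
    (m : ℕ) (cl : Fin n → ℕ) (hcl : ∀ i, cl i ≤ m)
    (hclval : ∀ i j, cl i = cl j → rhat i = rhat j)
    (g : ℕ → ℝ → EReal)
    (hg0 : g 0 = fun x => if x < 0 then (⊥ : EReal) else 0)
    (h : ℕ → ℕ → ℝ → EReal)
    (hh0 : ∀ t, 1 ≤ t → t ≤ T → h t 0 = g (t - 1))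
    (hhstep : ∀ t, 1 ≤ t → t ≤ T → ∀ j ≤ m, ∀ x : ℝ,
      h t (j + 1) x ≤
        conv (h t j) (knapFnR rhat q (Finset.univ.filter fun i => d i = t ∧ cl i = j)) x ∧
      conv (h t j) (knapFnR rhat q (Finset.univ.filter fun i => d i = t ∧ cl i = j)) x ≤
        ((1 + ε' : ℝ) : EReal) * h t (j + 1) x)
    (hgt : ∀ t, 1 ≤ t → t ≤ T → g t = trunc (h t (m + 1)) (c t)) :
    ∀ t, 1 ≤ t → t ≤ T → ∀ x : ℝ, 0 ≤ x → x ≤ (c t : ℝ) →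
      g t x ≤ f t x ∧
      f t x ≤ (((1 + ε) * (1 + ε') ^ ((m + 1) * t) : ℝ) : EReal) * g t x := by
  classical
  have hε1 : (0 : ℝ) < 1 + ε := by linarith
  have hε'1 : (0 : ℝ) < 1 + ε' := by linarith
  set F := fhatAux (g 0) rhat q d c with hFdef
  have hF0 : F 0 = g 0 := rfl
  have hFsucc : ∀ p : ℕ, F (p + 1) =
      trunc (conv (F p) (knapFnR rhat q (Finset.univ.filter fun i => d i = p + 1)))
        (c (p + 1)) := fun p => rfl
  have hg0cases : ∀ x, g 0 x = ⊥ ∨ 0 ≤ g 0 x := by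
    intro x; rw [hg0]; dsimp only; split
    · exact Or.inl rfl
    · exact Or.inr le_rfl
  have main : ∀ t, t ≤ T →
      ((∀ x, g t x ≤ F t x) ∧
        (∀ x, F t x ≤ (((1 + ε') ^ ((m + 1) * t) : ℝ) : EReal) * g t x)) ∧
      (1 ≤ t → (∀ x, F t x ≤ f t x) ∧
        (∀ x, f t x ≤ ((1 + ε : ℝ) : EReal) * F t x)) := by
    intro t
    induction t with
    | zero =>
      intro _
      refine ⟨⟨fun x => le_rfl, fun x => ?_⟩, fun h1 => absurd h1 (by omega)⟩
      rw [hF0, Nat.mul_zero, pow_zero, EReal.coe_one, one_mul]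
    | succ p ih =>
      intro hpT
      obtain ⟨⟨hg_le_F, hF_le_g⟩, hprev⟩ := ih (by omega)
      have h1t : 1 ≤ p + 1 := by omega
      have hh0' : h (p + 1) 0 = g p := by simpa using hh0 (p + 1) h1t hpT
      have hA0 : (Finset.univ.filter fun i : Fin n => d i = p + 1 ∧ cl i < 0) = ∅ := by
        apply Finset.filter_eq_empty_iff.2; intro i _; omega
      have hAsucc : ∀ j : ℕ,
          (Finset.univ.filter fun i : Fin n => d i = p + 1 ∧ cl i < j) ∪
            (Finset.univ.filter fun i : Fin n => d i = p + 1 ∧ cl i = j) =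
          (Finset.univ.filter fun i : Fin n => d i = p + 1 ∧ cl i < j + 1) := by
        intro j; ext i
        simp only [Finset.mem_union, Finset.mem_filter, Finset.mem_univ, true_and]
        omega
      have hAm : (Finset.univ.filter fun i : Fin n => d i = p + 1 ∧ cl i < m + 1) =
          (Finset.univ.filter fun i : Fin n => d i = p + 1) := by
        ext i
        have := hcl i
        simp only [Finset.mem_filter, Finset.mem_univ, true_and]
        omega
      have hdisjAC : ∀ j : ℕ,
          Disjoint (Finset.univ.filter fun i : Fin n => d i = p + 1 ∧ cl i < j)
            (Finset.univ.filter fun i : Fin n => d i = p + 1 ∧ cl i = j) := by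
        intro j
        rw [Finset.disjoint_left]
        intro i hi1 hi2
        simp only [Finset.mem_filter, Finset.mem_univ, true_and] at hi1 hi2
        omega
      -- (iii) lower bound inner induction
      have inner1 : ∀ j, j ≤ m + 1 → ∀ x, h (p + 1) j x ≤
          conv (F p) (knapFnR rhat q
            (Finset.univ.filter fun i : Fin n => d i = p + 1 ∧ cl i < j)) x := by
        intro j
        induction j with
        | zero =>
          intro _ x
          rw [hh0', hA0]
          have hknap : knapFnR rhat q (∅ : Finset (Fin n)) =
              fun y => if y < 0 then (⊥ : EReal) else 0 :=
            funext fun y => knap_empty rhat q y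
          rw [hknap]
          exact le_trans (hg_le_F x) (le_conv_g0_right x)
        | succ j ihj =>
          intro hj x
          refine le_trans ((hhstep (p + 1) h1t hpT j (by omega) x).1) ?_
          refine le_trans (conv_mono (fun y => ihj (by omega) y) (fun y => le_rfl) x) ?_
          rw [← hAsucc j]
          exact le_of_eq (knap_conv_assoc rhat q (hdisjAC j) (F p) x)
      -- (iv) upper bound inner induction
      have inner2 : ∀ j, j ≤ m + 1 → 1 ≤ j → ∀ x,
          conv (g p) (knapFnR rhat q
            (Finset.univ.filter fun i : Fin n => d i = p + 1 ∧ cl i < j)) x ≤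
          ((((1 + ε') ^ j : ℝ)) : EReal) * h (p + 1) j x := by
        intro j
        induction j with
        | zero => intro _ h0; omega
        | succ j ihj =>
          intro hj _ x
          rcases Nat.eq_zero_or_pos j with rfl | hjpos
          · have hC : (Finset.univ.filter fun i : Fin n => d i = p + 1 ∧ cl i < 0 + 1) =
                (Finset.univ.filter fun i : Fin n => d i = p + 1 ∧ cl i = 0) := by
              ext i
              simp only [Finset.mem_filter, Finset.mem_univ, true_and]
              omega
            rw [hC, ← hh0', pow_one]
            exact (hhstep (p + 1) h1t hpT 0 (by omega) x).2
          · have hpow1 : (1 : ℝ) ≤ (1 + ε') ^ j := one_le_pow₀ (by linarith)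
            calc conv (g p) (knapFnR rhat q
                  (Finset.univ.filter fun i : Fin n => d i = p + 1 ∧ cl i < j + 1)) x
                = conv (conv (g p) (knapFnR rhat q
                    (Finset.univ.filter fun i : Fin n => d i = p + 1 ∧ cl i < j)))
                    (knapFnR rhat q
                      (Finset.univ.filter fun i : Fin n => d i = p + 1 ∧ cl i = j)) x := by
                  rw [← hAsucc j]
                  exact (knap_conv_assoc rhat q (hdisjAC j) (g p) x).symm
              _ ≤ conv (fun y => ((((1 + ε') ^ j : ℝ)) : EReal) * h (p + 1) j y)
                    (knapFnR rhat q
                      (Finset.univ.filter fun i : Fin n => d i = p + 1 ∧ cl i = j)) x :=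
                  conv_mono (fun y => ihj (by omega) hjpos y) (fun y => le_rfl) x
              _ ≤ ((((1 + ε') ^ j : ℝ)) : EReal) * conv (h (p + 1) j)
                    (knapFnR rhat q
                      (Finset.univ.filter fun i : Fin n => d i = p + 1 ∧ cl i = j)) x :=
                  conv_scal_left hpow1 (fun y => knap_bot_or_nonneg rhat q _ y) x
              _ ≤ ((((1 + ε') ^ j : ℝ)) : EReal) *
                    (((1 + ε' : ℝ) : EReal) * h (p + 1) (j + 1) x) :=
                  mul_le_mul_of_nonneg_left ((hhstep (p + 1) h1t hpT j (by omega) x).2)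
                    (by exact_mod_cast (by positivity : (0:ℝ) ≤ (1 + ε') ^ j))
              _ = ((((1 + ε') ^ (j + 1) : ℝ)) : EReal) * h (p + 1) (j + 1) x := by
                  rw [← mul_assoc, ← EReal.coe_mul, ← pow_succ]
      have hiii : ∀ x, g (p + 1) x ≤ F (p + 1) x := by
        intro x
        rw [hgt (p + 1) h1t hpT, hFsucc p]
        refine trunc_mono (fun y => ?_) (c (p + 1)) x
        have hy := inner1 (m + 1) le_rfl y
        rwa [hAm] at hy
      have hLp1 : (1 : ℝ) ≤ (1 + ε') ^ ((m + 1) * p) := one_le_pow₀ (by linarith)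
      have hiv : ∀ x, F (p + 1) x ≤
          (((1 + ε') ^ ((m + 1) * (p + 1)) : ℝ) : EReal) * g (p + 1) x := by
        intro x
        rw [hFsucc p, hgt (p + 1) h1t hpT]
        have step2 : ∀ z, conv (fun y => (((1 + ε') ^ ((m + 1) * p) : ℝ) : EReal) * g p y)
            (knapFnR rhat q (Finset.univ.filter fun i => d i = p + 1)) z ≤
            (((1 + ε') ^ ((m + 1) * p) : ℝ) : EReal) *
              ((((1 + ε') ^ (m + 1) : ℝ) : EReal) * h (p + 1) (m + 1) z) := by
          intro z
          refine le_trans (conv_scal_left hLp1 (fun y => knap_bot_or_nonneg rhat q _ y) z) ?_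
          refine mul_le_mul_of_nonneg_left ?_
            (by exact_mod_cast (by positivity : (0:ℝ) ≤ (1 + ε') ^ ((m + 1) * p)))
          have hz := inner2 (m + 1) le_rfl (by omega) z
          rwa [hAm] at hz
        calc trunc (conv (F p)
              (knapFnR rhat q (Finset.univ.filter fun i => d i = p + 1))) (c (p + 1)) x
            ≤ trunc (fun z => (((1 + ε') ^ ((m + 1) * p) : ℝ) : EReal) *
                ((((1 + ε') ^ (m + 1) : ℝ) : EReal) * h (p + 1) (m + 1) z)) (c (p + 1)) x := by
              refine trunc_mono (fun z => ?_) (c (p + 1)) x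
              exact le_trans (conv_mono hF_le_g (fun y => le_rfl) z) (step2 z)
          _ = (((1 + ε') ^ ((m + 1) * (p + 1)) : ℝ) : EReal) *
                trunc (h (p + 1) (m + 1)) (c (p + 1)) x := by
              have heq : ∀ z : ℝ, (((1 + ε') ^ ((m + 1) * p) : ℝ) : EReal) *
                  ((((1 + ε') ^ (m + 1) : ℝ) : EReal) * h (p + 1) (m + 1) z) =
                  (((1 + ε') ^ ((m + 1) * (p + 1)) : ℝ) : EReal) * h (p + 1) (m + 1) z := by
                intro z
                rw [← mul_assoc, ← EReal.coe_mul, ← pow_add, Nat.mul_succ]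
              have : (fun z => (((1 + ε') ^ ((m + 1) * p) : ℝ) : EReal) *
                  ((((1 + ε') ^ (m + 1) : ℝ) : EReal) * h (p + 1) (m + 1) z)) =
                  fun z => (((1 + ε') ^ ((m + 1) * (p + 1)) : ℝ) : EReal) *
                    h (p + 1) (m + 1) z := funext heq
              rw [this]
              exact trunc_scal (by positivity) (h (p + 1) (m + 1)) (c (p + 1)) x
      -- previous-step exact function
      obtain ⟨fprev, hfeq, hlo, hhi⟩ : ∃ fprev : ℝ → EReal,
          f (p + 1) = trunc (conv fprev (knapFnR (fun i => (r i : ℝ)) q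
            (Finset.univ.filter fun i => d i = p + 1))) (c (p + 1)) ∧
          (∀ x, F p x ≤ fprev x) ∧
          (∀ x, fprev x ≤ ((1 + ε : ℝ) : EReal) * F p x) := by
        rcases Nat.eq_zero_or_pos p with rfl | hp
        · refine ⟨g 0, ?_, fun x => le_rfl, fun x => le_scal_e (by linarith) (hg0cases x)⟩
          rw [hf1]
          have : conv (g 0) (knapFnR (fun i => (r i : ℝ)) q
              (Finset.univ.filter fun i => d i = 0 + 1)) =
              knapFnR (fun i => (r i : ℝ)) q (Finset.univ.filter fun i => d i = 0 + 1) := by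
            funext y
            rw [hg0]
            exact conv_g0_left (knap_mono_cap _ q _) y
          rw [this]
        · refine ⟨f p, ?_, (hprev hp).1, (hprev hp).2⟩
          simpa using hft (p + 1) (by omega) hpT
      have hi : ∀ x, F (p + 1) x ≤ f (p + 1) x := by
        intro x
        rw [hFsucc p, hfeq]
        exact trunc_mono (fun y => conv_mono hlo
          (knap_mono_r rhat (fun i => (r i : ℝ)) q _ (fun i => (hrhat i).1)) y) (c (p + 1)) x
      have hii : ∀ x, f (p + 1) x ≤ ((1 + ε : ℝ) : EReal) * F (p + 1) x := by
        intro x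
        rw [hfeq, hFsucc p]
        have hknap : ∀ y, knapFnR (fun i => (r i : ℝ)) q
            (Finset.univ.filter fun i => d i = p + 1) y ≤
            ((1 + ε : ℝ) : EReal) * knapFnR rhat q
              (Finset.univ.filter fun i => d i = p + 1) y := by
          intro y
          rw [← knap_smul rhat q _ hε1]
          exact knap_mono_r _ _ q _ (fun i => (hrhat i).2) y
        have hfun : conv (fun y => ((1 + ε : ℝ) : EReal) * F p y)
            (fun y => ((1 + ε : ℝ) : EReal) * knapFnR rhat q
              (Finset.univ.filter fun i => d i = p + 1) y) =
            fun y => ((1 + ε : ℝ) : EReal) * conv (F p)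
              (knapFnR rhat q (Finset.univ.filter fun i => d i = p + 1)) y :=
          funext (conv_scal hε1 _ _)
        calc trunc (conv fprev (knapFnR (fun i => (r i : ℝ)) q
              (Finset.univ.filter fun i => d i = p + 1))) (c (p + 1)) x
            ≤ trunc (conv (fun y => ((1 + ε : ℝ) : EReal) * F p y)
                (fun y => ((1 + ε : ℝ) : EReal) * knapFnR rhat q
                  (Finset.univ.filter fun i => d i = p + 1) y)) (c (p + 1)) x :=
              trunc_mono (fun y => conv_mono hhi hknap y) (c (p + 1)) x
          _ = ((1 + ε : ℝ) : EReal) * trunc (conv (F p)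
                (knapFnR rhat q (Finset.univ.filter fun i => d i = p + 1))) (c (p + 1)) x := by
              rw [hfun]
              exact trunc_scal hε1 _ (c (p + 1)) x
      exact ⟨⟨hiii, hiv⟩, fun _ => ⟨hi, hii⟩⟩
  intro t h1t htT x hx0 hxc
  obtain ⟨⟨hg_le_F, hF_le_g⟩, hfp⟩ := main t htT
  obtain ⟨hFf, hfF⟩ := hfp h1t
  refine ⟨le_trans (hg_le_F x) (hFf x), ?_⟩
  calc f t x ≤ ((1 + ε : ℝ) : EReal) * F t x := hfF x
    _ ≤ ((1 + ε : ℝ) : EReal) * ((((1 + ε') ^ ((m + 1) * t) : ℝ) : EReal) * g t x) :=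
        mul_le_mul_of_nonneg_left (hF_le_g x) (by exact_mod_cast hε1.le)
    _ = (((1 + ε) * (1 + ε') ^ ((m + 1) * t) : ℝ) : EReal) * g t x := by
        rw [← mul_assoc, ← EReal.coe_mul]
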